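/- arXiv:0709.2791 — 5 statements merged into one kernel-verified Lean document; each statement's English description precedes it below -/
import Mathlib

section
/- Among all symmetric positive definite weighting matrices W, the choice W = P⁻¹ (P symmetric positive definite) minimizes the projected covariance (I - Υ_W A) P (I - Υ_W A)ᵀ in the Loewner order, where Υ_W = W⁻¹Aᵀ(A W⁻¹ Aᵀ)⁻¹: for every such W, (I - Υ_W A) P (I - Υ_W A)ᵀ - (I - Υ_{P⁻¹} A) P (I - Υ_{P⁻¹} A)ᵀ is positive semidefinite. -/
open Matrix

lemma aux_expand {n q : ℕ} (P : Matrix (Fin n) (Fin n) ℝ) (A : Matrix (Fin q) (Fin n) ℝ)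
    (S : Matrix (Fin q) (Fin q) ℝ) (B : Matrix (Fin n) (Fin q) ℝ)
    (hS : A * P * Aᵀ = S) (hPt : Pᵀ = P) (hSit : S⁻¹ᵀ = S⁻¹)
    (h1 : S * S⁻¹ = 1) (h2 : S⁻¹ * S = 1) :
    (1 - B*A)*P*(1 - B*A)ᵀ - (1 - (P*Aᵀ*S⁻¹)*A)*P*(1 - (P*Aᵀ*S⁻¹)*A)ᵀ
      = (B - P*Aᵀ*S⁻¹) * S * (B - P*Aᵀ*S⁻¹)ᵀ := by
  have e1 : ∀ {m : ℕ} (X : Matrix (Fin q) (Fin m) ℝ), A * (P * (Aᵀ * X)) = S * X := by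
    intro m X; rw [← hS]; simp [Matrix.mul_assoc]
  have f1 : ∀ {m : ℕ} (X : Matrix (Fin q) (Fin m) ℝ), S * (S⁻¹ * X) = X := by
    intro m X; rw [← Matrix.mul_assoc, h1, Matrix.one_mul]
  have f2 : ∀ {m : ℕ} (X : Matrix (Fin q) (Fin m) ℝ), S⁻¹ * (S * X) = X := by
    intro m X; rw [← Matrix.mul_assoc, h2, Matrix.one_mul]
  simp only [transpose_sub, transpose_one, transpose_mul, transpose_transpose, hPt, hSit]
  simp only [Matrix.sub_mul, Matrix.mul_sub, Matrix.one_mul, Matrix.mul_one, Matrix.mul_assoc]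
  simp only [e1, f1, f2]
  abel

/-- Among all symmetric positive definite weightings `W`, the choice `W = P⁻¹` minimizes
the projected covariance `(I - Υ_W A) P (I - Υ_W A)ᵀ` in the Loewner order. -/
theorem stmt5 {n q : ℕ} (P : Matrix (Fin n) (Fin n) ℝ) (hP : P.PosDef)
    (A : Matrix (Fin q) (Fin n) ℝ) (hA : A.rank = q) :
    ∀ W : Matrix (Fin n) (Fin n) ℝ, W.PosDef →
      ((1 - (W⁻¹ * Aᵀ * (A * W⁻¹ * Aᵀ)⁻¹) * A) * P *
          (1 - (W⁻¹ * Aᵀ * (A * W⁻¹ * Aᵀ)⁻¹) * A)ᵀ -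
        (1 - ((P⁻¹)⁻¹ * Aᵀ * (A * (P⁻¹)⁻¹ * Aᵀ)⁻¹) * A) * P *
          (1 - ((P⁻¹)⁻¹ * Aᵀ * (A * (P⁻¹)⁻¹ * Aᵀ)⁻¹) * A)ᵀ).PosSemidef := by
  intro W hW
  -- rows of A are linearly independent
  have hli : LinearIndependent ℝ (fun i => A i) :=
    linearIndependent_iff_card_eq_finrank_span.mpr
      (by rw [Set.finrank, Fintype.card_fin]; have := A.rank_eq_finrank_span_row; rw [hA] at this; exact this)
  have hinj : Function.Injective A.vecMul := vecMul_injective_iff.mpr hli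
  have hPt : Pᵀ = P := by
    rw [← conjTranspose_eq_transpose_of_trivial]; exact hP.isHermitian
  -- S := A * P * Aᵀ is positive definite
  have hS : (A * P * Aᵀ).PosDef := by
    rw [posDef_iff_dotProduct_mulVec]
    constructor
    · rw [← conjTranspose_eq_transpose_of_trivial]
      exact (hP.posSemidef.mul_mul_conjTranspose_same A).isHermitian
    · intro x hx
      have hx' : Aᵀ *ᵥ x ≠ 0 := by
        rw [← vecMul_transpose]
        intro h
        exact hx (hinj (by simpa using h))
      have := hP.dotProduct_mulVec_pos hx'
      simpa [← mulVec_mulVec, dotProduct_mulVec, ← mulVec_transpose] using this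
  have hPinv : (P⁻¹)⁻¹ = P :=
    Matrix.nonsing_inv_nonsing_inv P ((Matrix.isUnit_iff_isUnit_det P).mp hP.isUnit)
  have hSdet : IsUnit (A * P * Aᵀ).det := (Matrix.isUnit_iff_isUnit_det _).mp hS.isUnit
  have h1 : (A * P * Aᵀ) * (A * P * Aᵀ)⁻¹ = 1 := Matrix.mul_nonsing_inv _ hSdet
  have h2 : (A * P * Aᵀ)⁻¹ * (A * P * Aᵀ) = 1 := Matrix.nonsing_inv_mul _ hSdet
  have hSt : (A * P * Aᵀ)ᵀ = A * P * Aᵀ := by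
    rw [← conjTranspose_eq_transpose_of_trivial]; exact hS.isHermitian
  have hSit : ((A * P * Aᵀ)⁻¹)ᵀ = (A * P * Aᵀ)⁻¹ := by
    rw [Matrix.transpose_nonsing_inv, hSt]
  rw [hPinv,
    aux_expand P A (A * P * Aᵀ) (W⁻¹ * Aᵀ * (A * W⁻¹ * Aᵀ)⁻¹) rfl hPt hSit h1 h2]
  have := hS.posSemidef.mul_mul_conjTranspose_same
    (W⁻¹ * Aᵀ * (A * W⁻¹ * Aᵀ)⁻¹ - P * Aᵀ * (A * P * Aᵀ)⁻¹)
  rwa [conjTranspose_eq_transpose_of_trivial] at this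
end

section
/- Let P be an n×n symmetric positive semidefinite matrix, H an m×n matrix, R an m×m symmetric positive definite matrix, and S = H P Hᵀ + R. Then K* = P Hᵀ S⁻¹ minimizes the function K ↦ trace[(I - K H) P (I - K H)ᵀ + K R Kᵀ] over all n×m matrices K. -/
open Matrix

lemma trace_nonneg_aux {k : ℕ} {A : Matrix (Fin k) (Fin k) ℝ} (hA : A.PosSemidef) :
    0 ≤ A.trace := by
  rw [Matrix.trace]
  apply Finset.sum_nonneg
  intro i _
  have h := hA.diag_nonneg (i := i)
  simpa [dotProduct, Matrix.mulVec, Pi.single_apply, Matrix.diag] using h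

/-- `K* = P Hᵀ S⁻¹` minimizes `K ↦ trace[(I - KH)P(I - KH)ᵀ + K R Kᵀ]`. -/
theorem stmt6 {n m : ℕ} (P : Matrix (Fin n) (Fin n) ℝ) (hP : P.PosSemidef)
    (H : Matrix (Fin m) (Fin n) ℝ) (R : Matrix (Fin m) (Fin m) ℝ) (hR : R.PosDef)
    (S : Matrix (Fin m) (Fin m) ℝ) (hS : S = H * P * Hᵀ + R)
    (Kstar : Matrix (Fin n) (Fin m) ℝ) (hK : Kstar = P * Hᵀ * S⁻¹) :
    ∀ K : Matrix (Fin n) (Fin m) ℝ,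
      ((1 - Kstar * H) * P * (1 - Kstar * H)ᵀ + Kstar * R * Kstarᵀ).trace ≤
        ((1 - K * H) * P * (1 - K * H)ᵀ + K * R * Kᵀ).trace := by
  intro K
  have hPsym : Pᵀ = P := by have h := hP.1; simp at h; exact h
  have h1 : (H * P * Hᵀ).PosSemidef := by simpa using hP.mul_mul_conjTranspose_same H
  have hSpd : S.PosDef := by rw [hS]; exact Matrix.PosDef.posSemidef_add h1 hR
  have hSsym : Sᵀ = S := by have h := hSpd.1; simp at h; exact h
  have hdet : IsUnit S.det := isUnit_iff_ne_zero.mpr (ne_of_gt hSpd.det_pos)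
  have hKS : Kstar * S = P * Hᵀ := by
    rw [hK, Matrix.nonsing_inv_mul_cancel_right _ _ hdet]
  have hSK : S * Kstarᵀ = H * P := by
    have h := congrArg Matrix.transpose hKS
    simpa [Matrix.transpose_mul, hSsym, hPsym] using h
  have cross1 : K * (S * Kstarᵀ) = K * (H * P) := by rw [hSK]
  have cross2 : Kstar * (S * Kᵀ) = P * (Hᵀ * Kᵀ) := by
    rw [← Matrix.mul_assoc, hKS, Matrix.mul_assoc]
  have cross3 : Kstar * (S * Kstarᵀ) = Kstar * (H * P) := by rw [hSK]
  have hsym2 : Kstar * (H * P) = P * (Hᵀ * Kstarᵀ) := by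
    calc Kstar * (H * P) = Kstar * (S * Kstarᵀ) := by rw [hSK]
      _ = P * (Hᵀ * Kstarᵀ) := by rw [← Matrix.mul_assoc, hKS, Matrix.mul_assoc]
  have expand : ∀ L : Matrix (Fin n) (Fin m) ℝ,
      (1 - L * H) * P * (1 - L * H)ᵀ + L * R * Lᵀ
        = P - L * (H * P) - P * (Hᵀ * Lᵀ) + L * (S * Lᵀ) := by
    intro L
    have ht : (1 - L * H)ᵀ = 1 - Hᵀ * Lᵀ := by
      rw [Matrix.transpose_sub, Matrix.transpose_mul, Matrix.transpose_one]
    rw [ht, hS]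
    simp only [Matrix.mul_sub, Matrix.sub_mul, Matrix.mul_add, Matrix.add_mul,
      Matrix.mul_one, Matrix.one_mul, Matrix.mul_assoc]
    abel
  have key : (1 - K * H) * P * (1 - K * H)ᵀ + K * R * Kᵀ
      = ((1 - Kstar * H) * P * (1 - Kstar * H)ᵀ + Kstar * R * Kstarᵀ)
        + (K - Kstar) * (S * (K - Kstar)ᵀ) := by
    rw [expand K, expand Kstar]
    simp only [Matrix.transpose_sub, Matrix.sub_mul, Matrix.mul_sub, cross1, cross2,
      cross3, hsym2]
    abel
  have hpsd : ((K - Kstar) * (S * (K - Kstar)ᵀ)).PosSemidef := by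
    have := hSpd.posSemidef.mul_mul_conjTranspose_same (K - Kstar)
    simpa [Matrix.mul_assoc] using this
  have htr := trace_nonneg_aux hpsd
  rw [key]; simp only [Matrix.trace_add]
  linarith
end

section
/- With P symmetric PSD, R symmetric positive definite, S = H P Hᵀ + R, and K* = P Hᵀ S⁻¹, for every n×m matrix K: trace[(I - KH)P(I - KH)ᵀ + K R Kᵀ] = trace[P - P Hᵀ S⁻¹ H P] + trace[(K - K*) S (K - K*)ᵀ]. In particular the objective exceeds its minimum by trace[(K - K*) S (K - K*)ᵀ] ≥ 0. -/
open Matrix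

/-- Exact completion-of-squares identity for the Kalman gain objective, and the
resulting excess-over-minimum bound. -/
theorem stmt7 {n m : ℕ} (P : Matrix (Fin n) (Fin n) ℝ) (hP : P.PosSemidef)
    (H : Matrix (Fin m) (Fin n) ℝ) (R : Matrix (Fin m) (Fin m) ℝ) (hR : R.PosDef)
    (S : Matrix (Fin m) (Fin m) ℝ) (hS : S = H * P * Hᵀ + R)
    (Kstar : Matrix (Fin n) (Fin m) ℝ) (hK : Kstar = P * Hᵀ * S⁻¹) :
    ∀ K : Matrix (Fin n) (Fin m) ℝ,
      ((1 - K * H) * P * (1 - K * H)ᵀ + K * R * Kᵀ).trace =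
          (P - P * Hᵀ * S⁻¹ * H * P).trace +
            ((K - Kstar) * S * (K - Kstar)ᵀ).trace ∧
        0 ≤ ((K - Kstar) * S * (K - Kstar)ᵀ).trace := by
  intro K
  have hPHHt : (H * P * Hᵀ).PosSemidef := by
    have := hP.mul_mul_conjTranspose_same H
    simpa [Matrix.conjTranspose_eq_transpose_of_trivial] using this
  have hSpd : S.PosDef := hS ▸ Matrix.PosDef.posSemidef_add hPHHt hR
  have hdet : IsUnit S.det := hSpd.det_pos.ne'.isUnit
  have hSinv : S * S⁻¹ = 1 := mul_nonsing_inv S hdet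
  have hSinv' : S⁻¹ * S = 1 := nonsing_inv_mul S hdet
  have hSsym : Sᵀ = S := by
    have := hSpd.isHermitian
    simpa [Matrix.IsHermitian, Matrix.conjTranspose_eq_transpose_of_trivial] using this
  have hSinvSym : S⁻¹ᵀ = S⁻¹ := by
    rw [Matrix.transpose_nonsing_inv, hSsym]
  have hPsym : Pᵀ = P := by
    have := hP.isHermitian
    simpa [Matrix.IsHermitian, Matrix.conjTranspose_eq_transpose_of_trivial] using this
  have hpsd : ((K - Kstar) * S * (K - Kstar)ᵀ).PosSemidef := by
    have := hSpd.posSemidef.mul_mul_conjTranspose_same (K - Kstar)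
    simpa [Matrix.conjTranspose_eq_transpose_of_trivial] using this
  have htr : 0 ≤ ((K - Kstar) * S * (K - Kstar)ᵀ).trace := by
    rw [Matrix.trace]
    refine Finset.sum_nonneg fun i _ => ?_
    have := hpsd.diag_nonneg (i := i)
    simpa [dotProduct, Matrix.mulVec, Pi.single_apply, Matrix.diag] using this
  subst hK
  have hmat : (1 - K * H) * P * (1 - K * H)ᵀ + K * R * Kᵀ =
      (P - P * Hᵀ * S⁻¹ * H * P) + (K - P * Hᵀ * S⁻¹) * S * (K - P * Hᵀ * S⁻¹)ᵀ := by
    have hR' : R = S - H * P * Hᵀ := by rw [hS]; abel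
    rw [hR']
    simp only [Matrix.transpose_sub, Matrix.transpose_mul, Matrix.transpose_one,
      Matrix.transpose_transpose, hPsym, hSinvSym]
    have c1 : ∀ (X : Matrix (Fin m) (Fin n) ℝ), S⁻¹ * (S * X) = X := fun X => by
      rw [← Matrix.mul_assoc, hSinv', Matrix.one_mul]
    have c2 : ∀ (X : Matrix (Fin n) (Fin m) ℝ), X * S⁻¹ * S = X := fun X => by
      rw [Matrix.mul_assoc, hSinv', Matrix.mul_one]
    simp only [Matrix.mul_sub, Matrix.sub_mul, Matrix.mul_one, Matrix.one_mul,
      Matrix.mul_assoc, c1]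
    have c3 : ∀ (X : Matrix (Fin m) (Fin n) ℝ), S * (S⁻¹ * X) = X := fun X => by
      rw [← Matrix.mul_assoc, hSinv, Matrix.one_mul]
    simp only [c3]
    abel
  refine ⟨?_, htr⟩
  rw [hmat, trace_add]
end

section
/- Let S be an m×m symmetric positive definite matrix, ν ∈ ℝ^m a nonzero vector, A a q×n matrix of full row rank, x̂ ∈ ℝⁿ, K₀ ∈ ℝ^{n×m}, and b ∈ ℝ^q. Then the minimizer of the quadratic lᵀ(S ⊗ I_n)l over l ∈ ℝ^{mn} subject to (νᵀ ⊗ A)l = b - A(x̂ + K₀ν) is l* = vec[Aᵀ(A Aᵀ)⁻¹(b - A(x̂ + K₀ν))(νᵀS⁻¹ν)⁻¹ νᵀS⁻¹]. -/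
open Matrix Kronecker

/-- Column-stacking vectorization of a matrix. -/
def vecOf {m n : ℕ} (A : Matrix (Fin m) (Fin n) ℝ) : Fin n × Fin m → ℝ :=
  fun p => A p.2 p.1

section aux

private lemma aux_isUnit {q n : ℕ} (A : Matrix (Fin q) (Fin n) ℝ) (hA : A.rank = q) :
    IsUnit (A * Aᵀ) := by
  have h1 := Matrix.ker_mulVecLin_transpose_mul_self Aᵀ
  rw [transpose_transpose] at h1
  have hrt : Aᵀ.rank = q := by rw [Matrix.rank_transpose]; exact hA
  have h2 : Module.finrank ℝ (LinearMap.range Aᵀ.mulVecLin) = q := hrt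
  have h3 := LinearMap.finrank_range_add_finrank_ker (Aᵀ.mulVecLin)
  rw [h2] at h3
  simp [Module.finrank_fin_fun] at h3
  have hker : LinearMap.ker (A * Aᵀ).mulVecLin = ⊥ := by
    rw [h1, Matrix.mulVecLin_transpose]; exact h3
  exact Matrix.mulVec_injective_iff_isUnit.mp (LinearMap.ker_eq_bot.mp hker)

private lemma aux_constraint {m n q : ℕ} (ν u : Fin m → ℝ) (w : Fin n → ℝ) (c : ℝ)
    (A : Matrix (Fin q) (Fin n) ℝ)
    (r : Fin q → ℝ) (hνu : c * (ν ⬝ᵥ u) = 1) (hAw : A.mulVec w = r) (k : Fin q) :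
    ∑ p : Fin m × Fin n, (ν p.1 * A k p.2) * (c * (w p.2 * u p.1)) = r k := by
  have h1 : ∑ p : Fin m × Fin n, (ν p.1 * A k p.2) * (c * (w p.2 * u p.1))
      = (∑ i, c * (ν i * u i)) * (∑ j, A k j * w j) := by
    rw [Finset.sum_mul_sum]
    rw [show (∑ i : Fin m, ∑ j : Fin n, c * (ν i * u i) * (A k j * w j))
        = ∑ p : Fin m × Fin n, c * (ν p.1 * u p.1) * (A k p.2 * w p.2) from
      (Fintype.sum_prod_type (fun p : Fin m × Fin n =>
        c * (ν p.1 * u p.1) * (A k p.2 * w p.2))).symm]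
    exact Fintype.sum_congr _ _ (fun p => by ring)
  rw [h1]
  have h2 : (∑ i, c * (ν i * u i)) = c * (ν ⬝ᵥ u) := by
    rw [dotProduct, Finset.mul_sum]
  have h3 : (∑ j, A k j * w j) = A.mulVec w k := rfl
  rw [h2, h3, hνu, hAw, one_mul]

private lemma aux_Qlstar {m n : ℕ} (S : Matrix (Fin m) (Fin m) ℝ) (ν u : Fin m → ℝ)
    (w : Fin n → ℝ) (c : ℝ) (hSu : S.mulVec u = ν) :
    (S ⊗ₖ (1 : Matrix (Fin n) (Fin n) ℝ)).mulVec (fun p => c * (w p.2 * u p.1))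
      = fun p => c * ν p.1 * w p.2 := by
  funext p
  show ∑ x : Fin m × Fin n,
    (S p.1 x.1 * (1 : Matrix (Fin n) (Fin n) ℝ) p.2 x.2) * (c * (w x.2 * u x.1)) = _
  rw [Fintype.sum_prod_type]
  simp only [one_apply, mul_ite, ite_mul, mul_one, mul_zero, zero_mul,
    Finset.sum_ite_eq, Finset.mem_univ, if_true]
  rw [← hSu]
  simp only [mulVec, dotProduct, Finset.mul_sum, Finset.sum_mul]
  exact Fintype.sum_congr _ _ (fun i => by ring)

private lemma aux_orth {m n q : ℕ} (ν : Fin m → ℝ) (w : Fin n → ℝ) (c : ℝ)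
    (A : Matrix (Fin q) (Fin n) ℝ)
    (μ : Fin q → ℝ) (d : Fin m × Fin n → ℝ) (hw : w = Aᵀ.mulVec μ)
    (hCd : ∀ t : Fin q, ∑ p : Fin m × Fin n, (ν p.1 * A t p.2) * d p = 0) :
    ∑ p : Fin m × Fin n, d p * (c * ν p.1 * w p.2) = 0 := by
  subst hw
  have : ∀ p : Fin m × Fin n, d p * (c * ν p.1 * (Aᵀ.mulVec μ) p.2)
      = ∑ t : Fin q, c * μ t * ((ν p.1 * A t p.2) * d p) := by
    intro p
    simp only [mulVec, dotProduct, transpose_apply, Finset.mul_sum]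
    exact Fintype.sum_congr _ _ (fun t => by ring)
  rw [Fintype.sum_congr _ _ this, Finset.sum_comm]
  simp only [← Finset.mul_sum, hCd, mul_zero, Finset.sum_const_zero]

private lemma aux_decomp {m n : ℕ} (S : Matrix (Fin m) (Fin m) ℝ) (d : Fin m × Fin n → ℝ) :
    d ⬝ᵥ (S ⊗ₖ (1 : Matrix (Fin n) (Fin n) ℝ)).mulVec d
      = ∑ j : Fin n, (fun i => d (i, j)) ⬝ᵥ S.mulVec (fun i => d (i, j)) := by
  simp only [dotProduct, mulVec, kroneckerMap_apply, one_apply, mul_ite, ite_mul,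
    mul_one, mul_zero, zero_mul]
  rw [Fintype.sum_prod_type]
  rw [Finset.sum_comm]
  congr 1; funext j
  simp only [dotProduct, mulVec, Fintype.sum_prod_type, Finset.sum_ite_eq,
    Finset.mem_univ, if_true]

end aux

/-- The unique minimizer of `lᵀ (S ⊗ I_n) l` subject to `(νᵀ ⊗ A) l = b - A(x̂ + K₀ν)` is
`l* = vec[Aᵀ(AAᵀ)⁻¹(b - A(x̂ + K₀ν))(νᵀS⁻¹ν)⁻¹ νᵀS⁻¹]`. -/
theorem stmt8 {m n q : ℕ} (S : Matrix (Fin m) (Fin m) ℝ) (hS : S.PosDef)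
    (ν : Fin m → ℝ) (hν : ν ≠ 0)
    (A : Matrix (Fin q) (Fin n) ℝ) (hA : A.rank = q)
    (xhat : Fin n → ℝ) (K₀ : Matrix (Fin n) (Fin m) ℝ) (b : Fin q → ℝ)
    (r : Fin q → ℝ) (hr : r = b - A.mulVec (xhat + K₀.mulVec ν))
    (lstar : Fin m × Fin n → ℝ)
    (hl : lstar = vecOf ((ν ⬝ᵥ S⁻¹.mulVec ν)⁻¹ •
      vecMulVec ((Aᵀ * (A * Aᵀ)⁻¹).mulVec r) (vecMul ν S⁻¹))) :
    ((Matrix.of (fun (_ : Fin 1) (j : Fin m) => ν j) ⊗ₖ A).mulVec lstar = fun p => r p.2) ∧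
      ∀ l : Fin m × Fin n → ℝ,
        ((Matrix.of (fun (_ : Fin 1) (j : Fin m) => ν j) ⊗ₖ A).mulVec l = fun p => r p.2) → l ≠ lstar →
          lstar ⬝ᵥ (S ⊗ₖ (1 : Matrix (Fin n) (Fin n) ℝ)).mulVec lstar <
            l ⬝ᵥ (S ⊗ₖ (1 : Matrix (Fin n) (Fin n) ℝ)).mulVec l := by
  -- Notation
  set c : ℝ := (ν ⬝ᵥ S⁻¹.mulVec ν)⁻¹ with hc
  set u : Fin m → ℝ := vecMul ν S⁻¹ with huDef
  set w : Fin n → ℝ := (Aᵀ * (A * Aᵀ)⁻¹).mulVec r with hwDef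
  -- Basic facts about S
  have hc0 : 0 < ν ⬝ᵥ S⁻¹.mulVec ν := by
    have := (hS.inv).dotProduct_mulVec_pos hν
    simpa using this
  have hSisym : (S⁻¹)ᵀ = S⁻¹ := by
    rw [transpose_nonsing_inv]; congr 1; exact hS.1
  have hu : u = S⁻¹.mulVec ν := by
    rw [huDef]; conv_lhs => rw [← hSisym]
    exact vecMul_transpose _ _
  have hνu : c * (ν ⬝ᵥ u) = 1 := by
    rw [hu, hc]; exact inv_mul_cancel₀ hc0.ne'
  have hSu : S.mulVec u = ν := by
    rw [hu, mulVec_mulVec, mul_nonsing_inv _ hS.det_pos.ne'.isUnit, one_mulVec]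
  -- Facts about A
  have hAAu : IsUnit (A * Aᵀ) := aux_isUnit A hA
  have hAA1 : (A * Aᵀ) * (A * Aᵀ)⁻¹ = 1 :=
    mul_nonsing_inv _ ((isUnit_iff_isUnit_det _).mp hAAu)
  have hAw : A.mulVec w = r := by
    rw [hwDef, mulVec_mulVec, ← Matrix.mul_assoc, hAA1, one_mulVec]
  have hwμ : w = Aᵀ.mulVec ((A * Aᵀ)⁻¹.mulVec r) := by
    rw [hwDef, mulVec_mulVec]
  -- entrywise formula for lstar
  have hlf : lstar = fun p : Fin m × Fin n => c * (w p.2 * u p.1) := by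
    rw [hl]; funext p
    simp [vecOf, vecMulVec_apply, Matrix.smul_apply, mul_comm]
  -- constraint satisfaction
  have hconstr : (Matrix.of (fun (_ : Fin 1) (j : Fin m) => ν j) ⊗ₖ A).mulVec lstar
      = fun p => r p.2 := by
    funext p
    show ∑ x : Fin m × Fin n, (ν x.1 * A p.2 x.2) * lstar x = r p.2
    rw [hlf]
    exact aux_constraint ν u w c A r hνu hAw p.2
  refine ⟨hconstr, ?_⟩
  intro l hlc hlne
  set d : Fin m × Fin n → ℝ := l - lstar with hd
  have hld : l = lstar + d := by funext p; simp [hd]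
  have hdne : d ≠ 0 := sub_ne_zero.mpr hlne
  -- C d = 0
  have hCd : ∀ t : Fin q, ∑ p : Fin m × Fin n, (ν p.1 * A t p.2) * d p = 0 := by
    intro t
    have h1 := congrFun hconstr ((0 : Fin 1), t)
    have h2 := congrFun hlc ((0 : Fin 1), t)
    have h3 : ∑ p : Fin m × Fin n, (ν p.1 * A t p.2) * l p = r t := h2
    have h4 : ∑ p : Fin m × Fin n, (ν p.1 * A t p.2) * lstar p = r t := h1
    have : ∀ p : Fin m × Fin n, (ν p.1 * A t p.2) * d p
        = (ν p.1 * A t p.2) * l p - (ν p.1 * A t p.2) * lstar p := by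
      intro p; rw [hd]; simp [Pi.sub_apply]; ring
    rw [Fintype.sum_congr _ _ this, Finset.sum_sub_distrib, h3, h4, sub_self]
  -- Q lstar
  have hQl : (S ⊗ₖ (1 : Matrix (Fin n) (Fin n) ℝ)).mulVec lstar = fun p => c * ν p.1 * w p.2 := by
    rw [hlf]; exact aux_Qlstar S ν u w c hSu
  -- orthogonality : d ⬝ᵥ Q lstar = 0
  have horth : d ⬝ᵥ (S ⊗ₖ (1 : Matrix (Fin n) (Fin n) ℝ)).mulVec lstar = 0 := by
    rw [hQl]
    exact aux_orth ν w c A ((A * Aᵀ)⁻¹.mulVec r) d hwμ hCd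
  -- Q symmetric
  have hQsym : (S ⊗ₖ (1 : Matrix (Fin n) (Fin n) ℝ))ᵀ = S ⊗ₖ (1 : Matrix (Fin n) (Fin n) ℝ) := by
    rw [show (S ⊗ₖ (1 : Matrix (Fin n) (Fin n) ℝ))ᵀ
        = Sᵀ ⊗ₖ (1 : Matrix (Fin n) (Fin n) ℝ)ᵀ from (kroneckerMap_transpose _ _ _).symm]
    rw [transpose_one]
    have hSsym : Sᵀ = S := by simpa [Matrix.IsSymm] using hS.1
    rw [hSsym]
  have horth' : lstar ⬝ᵥ (S ⊗ₖ (1 : Matrix (Fin n) (Fin n) ℝ)).mulVec d = 0 := by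
    rw [dotProduct_mulVec]
    have : lstar ᵥ* (S ⊗ₖ (1 : Matrix (Fin n) (Fin n) ℝ))
        = (S ⊗ₖ (1 : Matrix (Fin n) (Fin n) ℝ)).mulVec lstar := by
      conv_lhs => rw [← hQsym]
      exact vecMul_transpose _ _
    rw [this, dotProduct_comm]
    exact horth
  -- positivity of d Q d
  have hdQd : 0 < d ⬝ᵥ (S ⊗ₖ (1 : Matrix (Fin n) (Fin n) ℝ)).mulVec d := by
    rw [aux_decomp S d]
    obtain ⟨p0, hp0⟩ : ∃ p, d p ≠ 0 := Function.ne_iff.mp hdne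
    refine Finset.sum_pos' (fun j _ => ?_) ⟨p0.2, Finset.mem_univ _, ?_⟩
    · have := hS.posSemidef.dotProduct_mulVec_nonneg (fun i => d (i, j))
      simpa using this
    · have hcol : (fun i => d (i, p0.2)) ≠ 0 := by
        intro h
        exact hp0 (by simpa using congrFun h p0.1)
      have := hS.dotProduct_mulVec_pos hcol
      simpa using this
  -- combine
  rw [hld, mulVec_add, dotProduct_add, add_dotProduct, add_dotProduct]
  linarith [hdQd, horth, horth']
end

section
/- Let S be symmetric positive definite (m×m), ν ∈ ℝ^m nonzero, A ∈ ℝ^{q×n} full row rank, P symmetric PSD, H ∈ ℝ^{m×n}, with unconstrained gain K = P Hᵀ S⁻¹ and unconstrained update x̂_u = x̂ + K ν. Then the constrained gain K^R = K - Aᵀ(AAᵀ)⁻¹(A x̂_u - b)(νᵀS⁻¹ν)⁻¹ νᵀS⁻¹ satisfies A(x̂ + K^R ν) = b. -/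
open Matrix

lemma vecMulVec_mulVec' {n m : ℕ} (w : Fin n → ℝ) (v : Fin m → ℝ) (x : Fin m → ℝ) :
    (vecMulVec w v).mulVec x = (v ⬝ᵥ x) • w := by
  ext i
  simp [vecMulVec, mulVec, dotProduct, Finset.mul_sum, mul_comm, mul_assoc, mul_left_comm]

lemma isUnit_of_rank_eq_card {q : ℕ} (M : Matrix (Fin q) (Fin q) ℝ)
    (h : M.rank = q) : IsUnit M := by
  rw [← Matrix.mulVec_surjective_iff_isUnit]
  have hr : LinearMap.range M.mulVecLin = ⊤ := by
    apply Submodule.eq_top_of_finrank_eq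
    rw [← Matrix.rank, h]
    simp [Module.finrank_pi]
  intro y
  have := LinearMap.range_eq_top.mp hr
  exact this y

/-- The restricted gain `K^R = K - Aᵀ(AAᵀ)⁻¹(A x̂_u - b)(νᵀS⁻¹ν)⁻¹νᵀS⁻¹` yields a
constrained update: `A(x̂ + K^R ν) = b`. -/
theorem stmt9 {n m q : ℕ} (P : Matrix (Fin n) (Fin n) ℝ) (hP : P.PosSemidef)
    (H : Matrix (Fin m) (Fin n) ℝ)
    (S : Matrix (Fin m) (Fin m) ℝ) (hS : S.PosDef)
    (ν : Fin m → ℝ) (hν : ν ≠ 0)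
    (A : Matrix (Fin q) (Fin n) ℝ) (hA : A.rank = q)
    (b : Fin q → ℝ) (xhat : Fin n → ℝ)
    (K : Matrix (Fin n) (Fin m) ℝ) (hK : K = P * Hᵀ * S⁻¹)
    (xhatu : Fin n → ℝ) (hxu : xhatu = xhat + K.mulVec ν)
    (KR : Matrix (Fin n) (Fin m) ℝ)
    (hKR : KR = K - (ν ⬝ᵥ S⁻¹.mulVec ν)⁻¹ •
      vecMulVec ((Aᵀ * (A * Aᵀ)⁻¹).mulVec (A.mulVec xhatu - b)) (vecMul ν S⁻¹)) :
    A.mulVec (xhat + KR.mulVec ν) = b := by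
  have hc : (0 : ℝ) < ν ⬝ᵥ S⁻¹.mulVec ν := by
    have := hS.inv.dotProduct_mulVec_pos hν
    simpa using this
  have hAAT : IsUnit (A * Aᵀ) := by
    apply isUnit_of_rank_eq_card
    rw [Matrix.rank_self_mul_transpose, hA]
  have hinv : A * (Aᵀ * (A * Aᵀ)⁻¹) = 1 := by
    rw [← Matrix.mul_assoc, Matrix.mul_nonsing_inv _ ((Matrix.isUnit_iff_isUnit_det _).mp hAAT)]
  have hdot : vecMul ν S⁻¹ ⬝ᵥ ν = ν ⬝ᵥ S⁻¹.mulVec ν := by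
    rw [Matrix.dotProduct_mulVec]
  rw [hKR, Matrix.mulVec_add, Matrix.sub_mulVec, Matrix.smul_mulVec,
    vecMulVec_mulVec', hdot]
  have hcne : (ν ⬝ᵥ S⁻¹.mulVec ν) ≠ 0 := hc.ne'
  rw [smul_smul, inv_mul_cancel₀ hcne, one_smul]
  rw [Matrix.mulVec_sub, Matrix.mulVec_mulVec, Matrix.mulVec_mulVec, hinv, Matrix.one_mulVec]
  have : A.mulVec xhat + (A.mulVec (K.mulVec ν) - (A.mulVec xhatu - b)) = b := by
    rw [hxu, Matrix.mulVec_add]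
    abel
  simpa [Matrix.mulVec_add, Matrix.mulVec_sub] using this
end
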